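/- Let (Ω, F, P) be a probability space with filtration (F_k)_{k=0}^n, let (Δ_k)_{k=1}^n be square-integrable adapted random variables (Δ_k being F_k-measurable), and let H be a square-integrable random variable. A pair (V_0, (φ_k)_{k=1}^n) with V_0 ∈ ℝ and φ_k real-valued F_{k-1}-measurable such that each φ_k Δ_k is square integrable minimizes E[(H - V_0 - Σ_{k=1}^n φ_k Δ_k)²] over all such pairs if and only if E[G] = 0 and E[G Δ_k | F_{k-1}] = 0 a.s. for all k = 1,…,n, where G = H - V_0 - Σ_{k=1}^n φ_k Δ_k. -/

import Mathlib

open MeasureTheory Finset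

section HedgeHelpers

variable {Ω : Type*} {m0 : MeasurableSpace Ω} {P : Measure Ω}

lemma hedge_integrable_mul {f g : Ω → ℝ} (hf : MemLp f 2 P) (hg : MemLp g 2 P) :
    Integrable (fun ω => f ω * g ω) P := by
  refine Integrable.mono' (((hf.integrable_sq.add hg.integrable_sq).div_const 2))
    (hf.aestronglyMeasurable.mul hg.aestronglyMeasurable) ?_
  filter_upwards with ω
  simp only [Pi.add_apply, Real.norm_eq_abs, abs_mul]
  nlinarith [sq_nonneg (|f ω| - |g ω|), sq_abs (f ω), sq_abs (g ω),
    abs_nonneg (f ω), abs_nonneg (g ω)]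

lemma hedge_sq_expand {f g : Ω → ℝ} (hf : MemLp f 2 P) (hg : MemLp g 2 P) :
    ∫ ω, (f ω + g ω) ^ 2 ∂P
      = (∫ ω, f ω ^ 2 ∂P) + 2 * (∫ ω, f ω * g ω ∂P) + ∫ ω, g ω ^ 2 ∂P := by
  have h1 : Integrable (fun ω => f ω ^ 2) P := hf.integrable_sq
  have h2 : Integrable (fun ω => g ω ^ 2) P := hg.integrable_sq
  have h3 : Integrable (fun ω => f ω * g ω) P := hedge_integrable_mul hf hg
  have hpt : ∀ ω, (f ω + g ω) ^ 2 = f ω ^ 2 + 2 * (f ω * g ω) + g ω ^ 2 := fun ω => by ring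
  simp_rw [hpt]
  have hA : Integrable (fun ω => f ω ^ 2 + 2 * (f ω * g ω)) P := h1.add (h3.const_mul 2)
  have hB : Integrable (fun ω => 2 * (f ω * g ω)) P := h3.const_mul 2
  rw [integral_add hA h2, integral_add h1 hB, integral_const_mul]

lemma hedge_zero_of {a b : ℝ} (hb : 0 ≤ b) (h : ∀ c : ℝ, 0 ≤ 2 * c * a + c ^ 2 * b) :
    a = 0 := by
  by_contra ha
  have hb1 : (0 : ℝ) < b + 1 := by linarith
  set d : ℝ := -(a / (b + 1)) with hd
  have hdne : d ≠ 0 := by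
    simp only [hd, neg_ne_zero]
    exact div_ne_zero ha (ne_of_gt hb1)
  have hd2 : 0 < d ^ 2 := by positivity
  have he : d * a = -(d ^ 2) * (b + 1) := by
    have h2 : d * (b + 1) = -a := by
      rw [hd, neg_mul, div_mul_cancel₀ a (ne_of_gt hb1)]
    rw [show a = -(d * (b + 1)) from by linarith]; ring
  have h1 := h d
  rw [show 2 * d * a = 2 * (d * a) from by ring, he] at h1
  nlinarith [h1, mul_nonneg hd2.le hb, hd2]

end HedgeHelpers

/-- First-order optimality characterization for discrete-time quadratic hedging:
`(V₀, φ)` minimizes the expected squared hedging error over all admissible pairs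
iff `E[G] = 0` and `E[G Δₖ | F_{k-1}] = 0` a.s. for all `k = 1,…,n`. -/
theorem quadratic_hedging_optimality {Ω : Type*} {m0 : MeasurableSpace Ω}
    (P : Measure Ω) [IsProbabilityMeasure P]
    (n : ℕ) (F : ℕ → MeasurableSpace Ω) (hFle : ∀ k, F k ≤ m0)
    (hFmono : Monotone F)
    (Δ : ℕ → Ω → ℝ)
    (hΔmeas : ∀ k, Measurable[F k] (Δ k))
    (hΔ2 : ∀ k, MemLp (Δ k) 2 P)
    (H : Ω → ℝ) (hH : MemLp H 2 P)
    (V0 : ℝ) (φ : ℕ → Ω → ℝ)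
    (hφmeas : ∀ k ∈ Finset.Icc 1 n, Measurable[F (k - 1)] (φ k))
    (hφ2 : ∀ k ∈ Finset.Icc 1 n, MemLp (fun ω => φ k ω * Δ k ω) 2 P) :
    (∀ (W0 : ℝ) (ψ : ℕ → Ω → ℝ),
        (∀ k ∈ Finset.Icc 1 n, Measurable[F (k - 1)] (ψ k)) →
        (∀ k ∈ Finset.Icc 1 n, MemLp (fun ω => ψ k ω * Δ k ω) 2 P) →
        (∫ ω, (H ω - V0 - ∑ k ∈ Finset.Icc 1 n, φ k ω * Δ k ω) ^ 2 ∂P) ≤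
          ∫ ω, (H ω - W0 - ∑ k ∈ Finset.Icc 1 n, ψ k ω * Δ k ω) ^ 2 ∂P)
      ↔
    ((∫ ω, (H ω - V0 - ∑ k ∈ Finset.Icc 1 n, φ k ω * Δ k ω) ∂P) = 0 ∧
      ∀ k ∈ Finset.Icc 1 n,
        P[fun ω => (H ω - V0 - ∑ j ∈ Finset.Icc 1 n, φ j ω * Δ j ω) * Δ k ω
          | F (k - 1)] =ᵐ[P] 0) := by
  set G : Ω → ℝ := fun ω => H ω - V0 - ∑ k ∈ Finset.Icc 1 n, φ k ω * Δ k ω with hGdef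
  have hGapp : ∀ ω, H ω - V0 - ∑ k ∈ Finset.Icc 1 n, φ k ω * Δ k ω = G ω := fun _ => rfl
  simp_rw [hGapp]
  have hG2 : MemLp G 2 P := by
    have hs : MemLp (fun ω => ∑ k ∈ Finset.Icc 1 n, φ k ω * Δ k ω) 2 P :=
      memLp_finset_sum _ (fun k hk => hφ2 k hk)
    exact (hH.sub (memLp_const V0)).sub hs
  constructor
  · -- minimality → first-order conditions
    intro hmin
    have hEG : ∫ ω, G ω ∂P = 0 := by
      set t := ∫ ω, G ω ∂P with ht
      have key := hmin (V0 + t) φ hφmeas hφ2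
      have heq : ∀ ω, H ω - (V0 + t) - ∑ k ∈ Finset.Icc 1 n, φ k ω * Δ k ω
          = G ω + (-t) := by
        intro ω; simp only [hGdef]; ring
      simp_rw [heq] at key
      have hexp : ∫ ω, (G ω + (-t)) ^ 2 ∂P
          = (∫ ω, G ω ^ 2 ∂P) + 2 * (∫ ω, G ω * (-t) ∂P) + ∫ ω, (-t) ^ 2 ∂P :=
        hedge_sq_expand hG2 (memLp_const (-t))
      have e1 : ∫ ω, G ω * (-t) ∂P = t * (-t) := by
        rw [integral_mul_const, ← ht]
      have e2 : (∫ ω, ((-t) : ℝ) ^ 2 ∂P) = t ^ 2 := by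
        simp [integral_const, measure_univ]
      rw [hexp, e1, e2] at key
      have h0 : t ^ 2 ≤ 0 := by nlinarith [key]
      exact pow_eq_zero_iff two_ne_zero |>.mp (le_antisymm h0 (sq_nonneg t))
    refine ⟨hEG, ?_⟩
    intro k hk
    have hm : F (k - 1) ≤ m0 := hFle _
    haveI : SigmaFinite (P.trim hm) := inferInstance
    have hGΔ : Integrable (fun ω => G ω * Δ k ω) P := hedge_integrable_mul hG2 (hΔ2 k)
    have hset : ∀ s : Set Ω, MeasurableSet[F (k - 1)] s →
        ∫ ω in s, G ω * Δ k ω ∂P = 0 := by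
      intro s hs
      set v : Ω → ℝ := s.indicator (Δ k) with hv
      have hv2 : MemLp v 2 P := (hΔ2 k).indicator (hm s hs)
      have indmul : ∀ ω, s.indicator (fun _ => (1 : ℝ)) ω * Δ k ω = v ω := by
        intro ω; by_cases hω : ω ∈ s <;> simp [hv, Set.indicator_apply, hω]
      have hkey : ∀ c : ℝ,
          0 ≤ 2 * c * (∫ ω, G ω * v ω ∂P) + c ^ 2 * (∫ ω, v ω ^ 2 ∂P) := by
        intro c
        set ψ : ℕ → Ω → ℝ := fun j =>
          if j = k then (fun ω => φ k ω + (-c) * s.indicator (fun _ => (1 : ℝ)) ω)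
          else φ j with hψ
        have hψmeas : ∀ j ∈ Finset.Icc 1 n, Measurable[F (j - 1)] (ψ j) := by
          intro j hj
          by_cases h : j = k
          · subst h
            simp only [hψ, if_pos rfl]
            exact (hφmeas j hj).add ((measurable_const.indicator hs).const_mul (-c))
          · simpa [hψ, h] using hφmeas j hj
        have hψ2 : ∀ j ∈ Finset.Icc 1 n, MemLp (fun ω => ψ j ω * Δ j ω) 2 P := by
          intro j hj
          by_cases h : j = k
          · subst h
            have he : (fun ω => ψ j ω * Δ j ω)
                = fun ω => φ j ω * Δ j ω + (-c) * v ω := by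
              funext ω
              simp only [hψ, if_pos rfl]
              rw [← indmul ω]; ring
            rw [he]
            exact (hφ2 j hj).add (hv2.const_mul (-c))
          · simp only [hψ, if_neg h]; exact hφ2 j hj
        have key := hmin V0 ψ hψmeas hψ2
        have hsum : ∀ ω, H ω - V0 - ∑ j ∈ Finset.Icc 1 n, ψ j ω * Δ j ω
            = G ω + c * v ω := by
          intro ω
          have h1 : ∀ j ∈ Finset.Icc 1 n, ψ j ω * Δ j ω
              = φ j ω * Δ j ω + (if j = k then (-c) * v ω else 0) := by
            intro j hj
            by_cases h : j = k
            · subst h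
              simp only [hψ, if_pos rfl, if_true]
              rw [← indmul ω]; ring
            · simp [hψ, h]
          rw [Finset.sum_congr rfl h1, Finset.sum_add_distrib,
            Finset.sum_ite_eq' _ k, if_pos hk]
          simp only [hGdef]; ring
        simp_rw [hsum] at key
        have hexp : ∫ ω, (G ω + c * v ω) ^ 2 ∂P
            = (∫ ω, G ω ^ 2 ∂P) + 2 * (∫ ω, G ω * (c * v ω) ∂P)
              + ∫ ω, (c * v ω) ^ 2 ∂P :=
          hedge_sq_expand hG2 (hv2.const_mul c)
        have e1 : ∫ ω, G ω * (c * v ω) ∂P = c * ∫ ω, G ω * v ω ∂P := by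
          rw [← integral_const_mul]
          congr 1; funext ω; ring
        have e2 : ∫ ω, (c * v ω) ^ 2 ∂P = c ^ 2 * ∫ ω, v ω ^ 2 ∂P := by
          rw [← integral_const_mul]
          congr 1; funext ω; ring
        rw [hexp, e1, e2] at key
        nlinarith [key]
      have hb : 0 ≤ ∫ ω, v ω ^ 2 ∂P := integral_nonneg fun ω => sq_nonneg _
      have ha := hedge_zero_of hb hkey
      rw [← ha, ← integral_indicator (hm s hs)]
      congr 1; funext ω
      by_cases hω : ω ∈ s <;> simp [hv, Set.indicator_apply, hω]
    have h0 : (0 : Ω → ℝ) =ᵐ[P] P[(fun ω => G ω * Δ k ω) | F (k - 1)] := by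
      refine ae_eq_condExp_of_forall_setIntegral_eq hm hGΔ
        (fun s _ _ => (integrable_zero _ _ _).integrableOn)
        (fun s hs _ => by rw [hset s hs]; simp)
        ((stronglyMeasurable_zero :
          StronglyMeasurable[F (k - 1)] (0 : Ω → ℝ)).aestronglyMeasurable)
    exact h0.symm
  · -- first-order conditions → minimality
    rintro ⟨hEG, hcond⟩ W0 ψ hψmeas hψ2
    set D : Ω → ℝ := fun ω =>
      (V0 - W0) + ∑ j ∈ Finset.Icc 1 n, (φ j ω * Δ j ω - ψ j ω * Δ j ω) with hDdef
    have hD2 : MemLp D 2 P := by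
      have hs : MemLp (fun ω => ∑ j ∈ Finset.Icc 1 n,
          (φ j ω * Δ j ω - ψ j ω * Δ j ω)) 2 P :=
        memLp_finset_sum _ (fun j hj => (hφ2 j hj).sub (hψ2 j hj))
      exact (memLp_const (V0 - W0)).add hs
    have hG'eq : ∀ ω, H ω - W0 - ∑ j ∈ Finset.Icc 1 n, ψ j ω * Δ j ω
        = G ω + D ω := by
      intro ω
      simp only [hGdef, hDdef, Finset.sum_sub_distrib]
      ring
    simp_rw [hG'eq]
    have hint : ∀ j ∈ Finset.Icc 1 n,
        ∫ ω, G ω * (φ j ω * Δ j ω - ψ j ω * Δ j ω) ∂P = 0 := by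
      intro j hj
      have hm : F (j - 1) ≤ m0 := hFle _
      haveI : SigmaFinite (P.trim hm) := inferInstance
      have hθmeas : StronglyMeasurable[F (j - 1)] (fun ω => φ j ω - ψ j ω) :=
        ((hφmeas j hj).sub (hψmeas j hj)).stronglyMeasurable
      have hg : Integrable (fun ω => G ω * Δ j ω) P := hedge_integrable_mul hG2 (hΔ2 j)
      have hθΔ2 : MemLp (fun ω => (φ j ω - ψ j ω) * Δ j ω) 2 P := by
        have he : (fun ω => (φ j ω - ψ j ω) * Δ j ω)
            = fun ω => φ j ω * Δ j ω - ψ j ω * Δ j ω := by funext ω; ring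
        rw [he]
        exact (hφ2 j hj).sub (hψ2 j hj)
      have hfg : Integrable
          ((fun ω => φ j ω - ψ j ω) * fun ω => G ω * Δ j ω) P := by
        have h1 := hedge_integrable_mul hG2 hθΔ2
        refine h1.congr (Filter.Eventually.of_forall fun ω => ?_)
        simp only [Pi.mul_apply]; ring
      have hpull := condExp_mul_of_stronglyMeasurable_left hθmeas hfg hg
      have hzero : P[(fun ω => G ω * Δ j ω) | F (j - 1)] =ᵐ[P] 0 := hcond j hj
      have hcz : P[(fun ω => φ j ω - ψ j ω) * fun ω => G ω * Δ j ω | F (j - 1)]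
          =ᵐ[P] 0 := by
        refine hpull.trans ?_
        filter_upwards [hzero] with ω hω
        simp [Pi.mul_apply, hω]
      have hI : ∫ ω, ((fun ω => φ j ω - ψ j ω) * fun ω => G ω * Δ j ω) ω ∂P = 0 := by
        rw [← integral_condExp hm, integral_congr_ae hcz]
        simp
      refine (integral_congr_ae (Filter.Eventually.of_forall fun ω => ?_)).trans hI
      simp only [Pi.mul_apply]; ring
    have hGD : ∫ ω, G ω * D ω ∂P = 0 := by
      have h1 : ∀ ω, G ω * D ω = G ω * (V0 - W0)
          + ∑ j ∈ Finset.Icc 1 n, G ω * (φ j ω * Δ j ω - ψ j ω * Δ j ω) := by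
        intro ω
        simp only [hDdef]
        rw [mul_add, Finset.mul_sum]
      simp_rw [h1]
      have hterm : ∀ j ∈ Finset.Icc 1 n,
          Integrable (fun ω => G ω * (φ j ω * Δ j ω - ψ j ω * Δ j ω)) P :=
        fun j hj => hedge_integrable_mul hG2 ((hφ2 j hj).sub (hψ2 j hj))
      have hC : Integrable (fun ω => G ω * (V0 - W0)) P :=
        (hG2.integrable one_le_two).mul_const _
      have hS : Integrable (fun ω => ∑ j ∈ Finset.Icc 1 n,
          G ω * (φ j ω * Δ j ω - ψ j ω * Δ j ω)) P := integrable_finset_sum _ hterm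
      rw [integral_add hC hS, integral_finset_sum _ hterm, integral_mul_const, hEG,
        Finset.sum_congr rfl hint]
      simp
    have hexp : ∫ ω, (G ω + D ω) ^ 2 ∂P
        = (∫ ω, G ω ^ 2 ∂P) + 2 * (∫ ω, G ω * D ω ∂P) + ∫ ω, D ω ^ 2 ∂P :=
      hedge_sq_expand hG2 hD2
    rw [hexp, hGD]
    have hDnn : 0 ≤ ∫ ω, D ω ^ 2 ∂P := integral_nonneg fun ω => sq_nonneg _
    linarith
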